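/- Let I be an 𝔪-primary monomial ideal in K[x_1,…,x_n]. If every minimal generator x_1^{α_1}x_2^{α_2}⋯x_n^{α_n} of I that is not a corner satisfies α_1/d_1 + α_2/d_2 + ⋯ + α_n/d_n ≥ n/2, then I is a good ideal. -/

import Mathlib

open MvPolynomial

namespace GasanovaRR

/-- The monomial `x^α` in `K[x_1,…,x_n]`. -/
noncomputable def mono (K : Type*) [Field K] {n : ℕ} (α : Fin n → ℕ) :
    MvPolynomial (Fin n) K :=
  MvPolynomial.monomial (Finsupp.equivFunOnFinite.symm α) 1

/-- `I` is a monomial ideal: it is generated by a set of monomials. -/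
def IsMonomialIdeal {K : Type*} [Field K] {n : ℕ}
    (I : Ideal (MvPolynomial (Fin n) K)) : Prop :=
  ∃ A : Set (Fin n → ℕ), I = Ideal.span (mono K '' A)

/-- `x^α` is a minimal monomial generator of `I`, i.e. `x^α ∈ G(I)`:
`x^α ∈ I` and no monomial in `I` strictly divides it. -/
def IsMinGen {K : Type*} [Field K] {n : ℕ}
    (I : Ideal (MvPolynomial (Fin n) K)) (α : Fin n → ℕ) : Prop :=
  mono K α ∈ I ∧ ∀ β : Fin n → ℕ, mono K β ∈ I → β ≤ α → β = α

/-- The point `α` lies in the box `B_{a_1,…,a_n}` (for box sizes `d_1,…,d_n`). -/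
def InBox {n : ℕ} (d a α : Fin n → ℕ) : Prop :=
  ∀ i, a i * d i ≤ α i ∧ α i ≤ (a i + 1) * d i

/-- `I` is a good ideal (w.r.t. box sizes `d`): for every `l ≥ 1`, every minimal
generator of `I^l` lies in a box whose coordinate sum is `l - 1`. -/
def IsGood {K : Type*} [Field K] {n : ℕ}
    (I : Ideal (MvPolynomial (Fin n) K)) (d : Fin n → ℕ) : Prop :=
  ∀ l : ℕ, 1 ≤ l → ∀ α : Fin n → ℕ, IsMinGen (I ^ l) α →
    ∃ a : Fin n → ℕ, InBox d a α ∧ ∑ i, a i = l - 1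

/-- `I` is an `𝔪`-primary monomial ideal whose minimal generating set contains
`μ_i = x_i^{d_i}` with `d_i > 0` for each `i`. -/
def MPrimaryWithCorners {K : Type*} [Field K] {n : ℕ}
    (I : Ideal (MvPolynomial (Fin n) K)) (d : Fin n → ℕ) : Prop :=
  IsMonomialIdeal I ∧ I ≠ ⊤ ∧ (∀ i, 0 < d i) ∧ ∀ i, IsMinGen I (Pi.single i (d i))

/-- The ideal `I_{a_1,…,a_n}` associated to the box `B_{a_1,…,a_n}`, generated by
`m / (μ_1^{a_1}⋯μ_n^{a_n})` for `m ∈ B_{a_1,…,a_n} ∩ G(I^l)`, `l = a_1+⋯+a_n+1`. -/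
noncomputable def boxIdeal {K : Type*} [Field K] {n : ℕ}
    (I : Ideal (MvPolynomial (Fin n) K)) (d a : Fin n → ℕ) :
    Ideal (MvPolynomial (Fin n) K) :=
  Ideal.span ((fun α => mono K (α - fun i => a i * d i)) ''
    {α | InBox d a α ∧ IsMinGen (I ^ (∑ i, a i + 1)) α})

/-- The Ratliff–Rush closure `Ĩ = ⋃_{k ≥ 0} (I^{k+1} : I^k)`. -/
noncomputable def ratliffRush {K : Type*} [Field K] {n : ℕ}
    (I : Ideal (MvPolynomial (Fin n) K)) : Ideal (MvPolynomial (Fin n) K) :=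
  ⨆ k : ℕ, (I ^ (k + 1)).colon ((I ^ k : Ideal (MvPolynomial (Fin n) K)) : Set (MvPolynomial (Fin n) K))

/-- The cone in `ℕ^n` with set `S` of fixed coordinates and vertex `v`. -/
def Cone {n : ℕ} (S : Set (Fin n)) (v : Fin n → ℕ) : Set (Fin n → ℕ) :=
  {b | (∀ i ∈ S, b i = v i) ∧ ∀ i ∉ S, v i ≤ b i}

/-- `I` is a very good ideal: it is good and `I_{a_1,…,a_n} = I` for all boxes. -/
def IsVeryGood {K : Type*} [Field K] {n : ℕ}
    (I : Ideal (MvPolynomial (Fin n) K)) (d : Fin n → ℕ) : Prop :=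
  IsGood I d ∧ ∀ a : Fin n → ℕ, boxIdeal I d a = I

section Auxiliary

variable {K : Type*} [Field K] {n : ℕ}

lemma mono_zero : mono K (0 : Fin n → ℕ) = 1 := by
  have : (Finsupp.equivFunOnFinite.symm (0 : Fin n → ℕ)) = 0 := by
    ext i; simp
  simp [mono, this]

lemma mono_add (a b : Fin n → ℕ) : mono K (a + b) = mono K a * mono K b := by
  have h : Finsupp.equivFunOnFinite.symm (a + b)
      = Finsupp.equivFunOnFinite.symm a + Finsupp.equivFunOnFinite.symm b := by
    ext i; simp
  rw [mono, mono, mono, monomial_mul, mul_one, h]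

lemma mono_image (A : Set (Fin n → ℕ)) :
    mono K '' A = (fun s => monomial s (1 : K)) '' (Finsupp.equivFunOnFinite.symm '' A) := by
  rw [Set.image_image]; rfl

lemma mono_mem_span_iff {A : Set (Fin n → ℕ)} {γ : Fin n → ℕ} :
    mono K γ ∈ Ideal.span (mono K '' A) ↔ ∃ δ ∈ A, δ ≤ γ := by
  rw [mono_image, mono, mem_ideal_span_monomial_image]
  have hsup : (monomial (Finsupp.equivFunOnFinite.symm γ) (1 : K)).support
      = {Finsupp.equivFunOnFinite.symm γ} := by
    classical
    rw [support_monomial, if_neg one_ne_zero]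
  rw [hsup]
  constructor
  · intro h
    obtain ⟨si, hsi, hle⟩ := h (Finsupp.equivFunOnFinite.symm γ) (Finset.mem_singleton_self _)
    obtain ⟨δ, hδ, rfl⟩ := hsi
    refine ⟨δ, hδ, fun i => ?_⟩
    have := Finsupp.le_def.mp hle i
    simpa using this
  · rintro ⟨δ, hδ, hle⟩ xi hxi
    rw [Finset.mem_singleton] at hxi
    subst hxi
    refine ⟨Finsupp.equivFunOnFinite.symm δ, ⟨δ, hδ, rfl⟩, Finsupp.le_def.mpr fun i => ?_⟩
    simpa using hle i

lemma span_pow (A : Set (Fin n → ℕ)) (l : ℕ) :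
    (Ideal.span (mono K '' A)) ^ l =
      Ideal.span (mono K ''
        {γ | ∃ f : Fin l → (Fin n → ℕ), (∀ j, f j ∈ A) ∧ γ = ∑ j, f j}) := by
  induction l with
  | zero =>
    have hset : {γ : Fin n → ℕ | ∃ f : Fin 0 → (Fin n → ℕ), (∀ j, f j ∈ A) ∧ γ = ∑ j, f j}
        = {0} := by
      ext γ
      constructor
      · rintro ⟨f, -, rfl⟩; simp
      · rintro rfl; exact ⟨Fin.elim0, fun j => j.elim0, by simp⟩
    rw [pow_zero, hset, Set.image_singleton, mono_zero, Ideal.span_singleton_one,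
      Ideal.one_eq_top]
  | succ l ih =>
    rw [pow_succ, ih, Ideal.span_mul_span']
    congr 1
    ext p
    constructor
    · rintro ⟨p1, ⟨γ, ⟨f, hf, rfl⟩, rfl⟩, p2, ⟨δ, hδ, rfl⟩, rfl⟩
      refine ⟨(∑ j, f j) + δ, ⟨Fin.snoc f δ, fun j => ?_, ?_⟩, mono_add _ _⟩
      · refine Fin.lastCases ?_ (fun j => ?_) j
        · simpa using hδ
        · simpa using hf j
      · rw [Fin.sum_univ_castSucc]
        simp
    · rintro ⟨γ, ⟨f, hf, rfl⟩, rfl⟩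
      refine ⟨mono K (∑ j : Fin l, f (Fin.castSucc j)), ⟨∑ j : Fin l, f (Fin.castSucc j),
        ⟨fun j => f (Fin.castSucc j), fun j => hf _, rfl⟩, rfl⟩,
        mono K (f (Fin.last l)), ⟨f (Fin.last l), hf _, rfl⟩, ?_⟩
      show mono K _ * mono K _ = _
      rw [← mono_add]
      congr 1
      exact (Fin.sum_univ_castSucc f).symm

lemma mono_mem_pow_iff {A : Set (Fin n → ℕ)} {γ : Fin n → ℕ} {l : ℕ} :
    mono K γ ∈ (Ideal.span (mono K '' A)) ^ l ↔
      ∃ f : Fin l → (Fin n → ℕ), (∀ j, f j ∈ A) ∧ ∑ j, f j ≤ γ := by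
  rw [span_pow, mono_mem_span_iff]
  constructor
  · rintro ⟨δ, ⟨f, hf, rfl⟩, hle⟩
    exact ⟨f, hf, hle⟩
  · rintro ⟨f, hf, hle⟩
    exact ⟨∑ j, f j, ⟨f, hf, rfl⟩, hle⟩

lemma mono_sum_mem_pow {I : Ideal (MvPolynomial (Fin n) K)} {J : Type*} [DecidableEq J]
    (s : Finset J) (g : J → Fin n → ℕ) (c : J → ℕ)
    (h : ∀ j ∈ s, mono K (g j) ∈ I ^ (c j)) :
    mono K (∑ j ∈ s, g j) ∈ I ^ (∑ j ∈ s, c j) := by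
  induction s using Finset.cons_induction with
  | empty => simp [mono_zero]
  | cons j s hj ih =>
    rw [Finset.sum_cons, Finset.sum_cons, mono_add, pow_add]
    exact Ideal.mul_mem_mul (h j (Finset.mem_cons_self _ _))
      (ih fun j' hj' => h j' (Finset.mem_cons_of_mem hj'))

lemma exists_minGen_le {I : Ideal (MvPolynomial (Fin n) K)} (γ : Fin n → ℕ)
    (hγ : mono K γ ∈ I) : ∃ β, β ≤ γ ∧ IsMinGen I β := by
  have main : ∀ N (γ : Fin n → ℕ), ∑ i, γ i ≤ N → mono K γ ∈ I →
      ∃ β, β ≤ γ ∧ IsMinGen I β := by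
    intro N
    induction N with
    | zero =>
      intro γ hN hm
      refine ⟨γ, le_rfl, hm, fun β hβ hle => ?_⟩
      funext i
      have h1 : γ i = 0 := by
        by_contra h
        have hpos : 0 < ∑ i, γ i := Finset.sum_pos'
          (fun _ _ => Nat.zero_le _) ⟨i, Finset.mem_univ i, Nat.pos_of_ne_zero h⟩
        omega
      have h2 : β i ≤ γ i := hle i
      omega
    | succ N ih =>
      intro γ hN hm
      by_cases hall : ∀ β : Fin n → ℕ, mono K β ∈ I → β ≤ γ → β = γ
      · exact ⟨γ, le_rfl, hm, hall⟩
      · push_neg at hall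
        obtain ⟨β, hβI, hβle, hne⟩ := hall
        have hlt : ∑ i, β i < ∑ i, γ i := by
          apply Finset.sum_lt_sum (fun i _ => hβle i)
          by_contra hc
          push_neg at hc
          exact hne (funext fun i => le_antisymm (hβle i) (hc i (Finset.mem_univ i)))
        obtain ⟨β', hβ'le, hmin⟩ := ih β (by omega) hβI
        exact ⟨β', le_trans hβ'le hβle, hmin⟩
  exact main (∑ i, γ i) γ le_rfl hγ

lemma single_mul_eq (d : Fin n → ℕ) (i : Fin n) (c : ℕ) :
    (fun j => (Pi.single i c : Fin n → ℕ) j * d j) = Pi.single i (c * d i) := by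
  funext j
  by_cases h : j = i
  · subst h; simp
  · simp [Pi.single_eq_of_ne h]

lemma corner_minGen {I : Ideal (MvPolynomial (Fin n) K)} {d : Fin n → ℕ}
    (hI : MPrimaryWithCorners I d) {β : Fin n → ℕ} (hβ : IsMinGen I β)
    (hc : ∃ k : Fin n → ℕ, β = fun i => k i * d i) :
    ∃ i, β = Pi.single i (d i) := by
  obtain ⟨-, hItop, hd, hcor⟩ := hI
  obtain ⟨k, hk⟩ := hc
  by_cases hk0 : ∀ i, k i = 0
  · exfalso
    apply hItop
    rw [Ideal.eq_top_iff_one]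
    have hβ0 : β = 0 := by
      funext i; rw [hk]; simp [hk0 i]
    have := hβ.1
    rwa [hβ0, mono_zero] at this
  · push_neg at hk0
    obtain ⟨i, hi⟩ := hk0
    have hle : Pi.single i (d i) ≤ β := by
      rw [hk]
      intro j
      rcases eq_or_ne j i with rfl | hji
      · simp only [Pi.single_eq_same]
        calc d j = 1 * d j := (one_mul _).symm
        _ ≤ k j * d j := Nat.mul_le_mul_right _ (Nat.one_le_iff_ne_zero.mpr hi)
      · simp [Pi.single_eq_of_ne hji]
    exact ⟨i, (hβ.2 _ (hcor i).1 hle).symm⟩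

lemma minGen_corner_of_one {I : Ideal (MvPolynomial (Fin 1) K)} {d : Fin 1 → ℕ}
    (hI : MPrimaryWithCorners I d) {β : Fin 1 → ℕ} (hβ : IsMinGen I β) :
    ∃ k : Fin 1 → ℕ, β = fun i => k i * d i := by
  have key : β = Pi.single 0 (d 0) := by
    rcases le_total (β 0) (d 0) with h | h
    · apply (hI.2.2.2 0).2 β hβ.1
      intro j
      have hj : j = 0 := Subsingleton.elim _ _
      subst hj
      simpa using h
    · refine (hβ.2 _ (hI.2.2.2 0).1 ?_).symm
      intro j
      have hj : j = 0 := Subsingleton.elim _ _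
      subst hj
      simpa using h
  refine ⟨Pi.single 0 1, ?_⟩
  rw [key, single_mul_eq d 0 1, one_mul]

lemma sum_corners {l : ℕ} (d : Fin n → ℕ) (f : Fin l → Fin n → ℕ) (S : Finset (Fin l))
    (h : ∀ j ∈ S, ∃ i, f j = Pi.single i (d i)) :
    ∃ k : Fin n → ℕ, (∑ j ∈ S, f j) = (fun i => k i * d i) ∧ ∑ i, k i = S.card := by
  classical
  induction S using Finset.cons_induction with
  | empty => exact ⟨0, by funext i; simp, by simp⟩
  | cons j S hj ih =>
    obtain ⟨k, hk, hkc⟩ := ih fun j' hj' => h j' (Finset.mem_cons_of_mem hj')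
    obtain ⟨i, hi⟩ := h j (Finset.mem_cons_self _ _)
    refine ⟨k + Pi.single i 1, ?_, ?_⟩
    · rw [Finset.sum_cons, hk, hi]
      funext i'
      by_cases h' : i' = i
      · subst h'; simp [add_mul]; ring
      · simp [Pi.single_eq_of_ne h', add_mul]
    · simp only [Pi.add_apply]
      rw [Finset.sum_add_distrib, hkc, Finset.card_cons]
      congr 1
      rw [Finset.sum_pi_single']
      simp

lemma exists_sum_eq {f g : Fin n → ℕ} (hfg : ∀ i, f i ≤ g i) (s : ℕ)
    (hs1 : ∑ i, f i ≤ s) (hs2 : s ≤ ∑ i, g i) :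
    ∃ a : Fin n → ℕ, (∀ i, f i ≤ a i ∧ a i ≤ g i) ∧ ∑ i, a i = s := by
  induction s, hs1 using Nat.le_induction with
  | base => exact ⟨f, fun i => ⟨le_rfl, hfg i⟩, rfl⟩
  | succ s hs ih =>
    obtain ⟨a, ha, hsum⟩ := ih (by omega)
    have hex : ∃ i, a i < g i := by
      by_contra hc
      push_neg at hc
      have : ∑ i, g i ≤ ∑ i, a i := Finset.sum_le_sum fun i _ => hc i
      omega
    obtain ⟨i, hi⟩ := hex
    refine ⟨Function.update a i (a i + 1), fun j => ?_, ?_⟩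
    · by_cases hji : j = i
      · subst hji
        rw [Function.update_self]
        exact ⟨(ha j).1.trans (Nat.le_succ _), hi⟩
      · rw [Function.update_of_ne hji]
        exact ha j
    · rw [Finset.sum_update_of_mem (Finset.mem_univ i)]
      have h2 : ∑ j, a j = a i + ∑ j ∈ Finset.univ \ {i}, a j :=
        Finset.sum_eq_add_sum_sdiff_singleton_of_mem (Finset.mem_univ i) a
      omega

end Auxiliary

/-- Theorem 3.7 (sufficient condition): if every minimal generator `x^α` of `I`
which is not a corner satisfies `α_1/d_1 + ⋯ + α_n/d_n ≥ n/2`, then `I` is good. -/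
theorem sufficient_condition {K : Type*} [Field K] {n : ℕ}
    (I : Ideal (MvPolynomial (Fin n) K)) (d : Fin n → ℕ)
    (hI : MPrimaryWithCorners I d)
    (hsuff : ∀ α : Fin n → ℕ, IsMinGen I α →
      (¬ ∃ k : Fin n → ℕ, α = fun i => k i * d i) →
      (n : ℚ) / 2 ≤ ∑ i, (α i : ℚ) / (d i : ℚ)) :
    IsGood I d := by
  classical
  obtain ⟨⟨A, hA⟩, hItop, hd, hcor⟩ := hI
  intro l hl α hα
  -- exclude n = 0
  rcases Nat.eq_zero_or_pos n with hn0 | hn0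
  · exfalso
    apply hItop
    rw [Ideal.eq_top_iff_one]
    have hα0 : α = 0 := by
      funext i
      exact absurd i.isLt (by omega)
    have h1 : mono K α = 1 := by rw [hα0, mono_zero]
    have hmem1 := hα.1
    rw [h1] at hmem1
    exact Ideal.pow_le_self (by omega) hmem1
  -- factorization into minimal generators
  have hαI := hα.1
  rw [hA, mono_mem_pow_iff] at hαI
  obtain ⟨f0, hf0A, hf0le⟩ := hαI
  have hmem : ∀ j, mono K (f0 j) ∈ I := fun j => by
    rw [hA]; exact Ideal.subset_span ⟨f0 j, hf0A j, rfl⟩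
  choose β hβle hβmin using fun j => exists_minGen_le (I := I) (f0 j) (hmem j)
  have hsumle : (∑ j, β j) ≤ α :=
    le_trans (Finset.sum_le_sum fun j _ => hβle j) hf0le
  have hprod : mono K (∑ j, β j) ∈ I ^ l := by
    have := mono_sum_mem_pow (I := I) Finset.univ β (fun _ => 1)
      (fun j _ => by rw [pow_one]; exact (hβmin j).1)
    simpa using this
  have hαeq : (∑ j, β j) = α := hα.2 _ hprod hsumle
  -- the set of non-corner factors
  set T : Finset (Fin l) :=
    Finset.univ.filter (fun j => ¬ ∃ k : Fin n → ℕ, β j = fun i => k i * d i) with hT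
  have hTc : ∀ j ∈ Tᶜ, ∃ i, β j = Pi.single i (d i) := by
    intro j hj
    rw [Finset.mem_compl, hT, Finset.mem_filter] at hj
    push_neg at hj
    exact corner_minGen ⟨⟨A, hA⟩, hItop, hd, hcor⟩ (hβmin j) (hj (Finset.mem_univ j))
  obtain ⟨k, hk, hkcard⟩ := sum_corners d β Tᶜ hTc
  set B : Fin n → ℕ := ∑ j ∈ T, β j with hB
  have hαsplit : ∀ i, α i = k i * d i + B i := by
    intro i
    have : (∑ j ∈ Tᶜ, β j) + ∑ j ∈ T, β j = ∑ j, β j := by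
      rw [add_comm]; exact Finset.sum_add_sum_compl T β
    rw [← hαeq, ← this, hk]
    simp [hB]
  set b : Fin n → ℕ := fun i => B i / d i with hb
  -- cardinality facts
  have hcards : T.card + Tᶜ.card = l := by
    simpa using Finset.card_add_card_compl T
  -- key lower bound : T.card ≤ ∑ b + 1
  have hbound : T.card ≤ ∑ i, b i + 1 := by
    rcases Nat.lt_or_ge T.card 2 with ht | ht
    · omega
    · -- at least two non-corner factors forces n ≥ 2
      have hn2 : 2 ≤ n := by
        by_contra hc
        have hn1 : n = 1 := by omega
        subst hn1
        have : T = ∅ := by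
          apply Finset.eq_empty_of_forall_notMem
          intro j hj
          rw [hT, Finset.mem_filter] at hj
          exact hj.2 (minGen_corner_of_one ⟨⟨A, hA⟩, hItop, hd, hcor⟩ (hβmin j))
        rw [this] at ht
        simp at ht
      -- rational estimates
      have key : ∀ j ∈ T, (n : ℚ) / 2 ≤ ∑ i, (β j i : ℚ) / (d i : ℚ) := by
        intro j hj
        rw [hT, Finset.mem_filter] at hj
        exact hsuff _ (hβmin j) hj.2
      have h1 : (T.card : ℚ) * ((n : ℚ) / 2) ≤ ∑ j ∈ T, ∑ i, (β j i : ℚ) / (d i : ℚ) := by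
        calc (T.card : ℚ) * ((n : ℚ) / 2) = ∑ _j ∈ T, (n : ℚ) / 2 := by
              rw [Finset.sum_const, nsmul_eq_mul]
        _ ≤ _ := Finset.sum_le_sum key
      have h2 : ∑ j ∈ T, ∑ i, (β j i : ℚ) / (d i : ℚ) = ∑ i, (B i : ℚ) / (d i : ℚ) := by
        rw [Finset.sum_comm]
        apply Finset.sum_congr rfl
        intro i _
        rw [← Finset.sum_div]
        congr 1
        rw [hB]
        push_cast [Finset.sum_apply]
        rfl
      have h3 : ∀ i, (B i : ℚ) / (d i : ℚ) < (b i : ℚ) + 1 := by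
        intro i
        have hdi := hd i
        have hlt : B i < (b i + 1) * d i := by
          have := Nat.div_add_mod (B i) (d i)
          have := Nat.mod_lt (B i) hdi
          rw [hb]
          nlinarith [Nat.div_add_mod (B i) (d i)]
        rw [div_lt_iff₀ (by exact_mod_cast hdi)]
        calc (B i : ℚ) < ((b i + 1) * d i : ℕ) := by exact_mod_cast hlt
        _ = ((b i : ℚ) + 1) * (d i : ℚ) := by push_cast; ring
      have h4 : ∑ i, (B i : ℚ) / (d i : ℚ) < (∑ i, (b i : ℚ)) + n := by
        calc ∑ i, (B i : ℚ) / (d i : ℚ) < ∑ i, ((b i : ℚ) + 1) :=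
              Finset.sum_lt_sum_of_nonempty
                (Finset.univ_nonempty_iff.mpr (Fin.pos_iff_nonempty.mp hn0))
                (fun i _ => h3 i)
        _ = (∑ i, (b i : ℚ)) + n := by rw [Finset.sum_add_distrib]; simp
      -- conclude
      by_contra hcon
      push_neg at hcon
      have hSb : ((∑ i, b i : ℕ) : ℚ) + 2 ≤ (T.card : ℚ) := by exact_mod_cast hcon
      have hSb' : (∑ i, (b i : ℚ)) = ((∑ i, b i : ℕ) : ℚ) := by push_cast; rfl
      have hN : (2 : ℚ) ≤ (n : ℚ) := by exact_mod_cast hn2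
      have hfinal : (T.card : ℚ) * ((n : ℚ) / 2) < (∑ i, (b i : ℚ)) + n :=
        lt_of_le_of_lt (h1.trans (le_of_eq h2)) h4
      rw [hSb'] at hfinal
      set S : ℚ := ((∑ i, b i : ℕ) : ℚ) with hS
      have hS0 : 0 ≤ S := by rw [hS]; positivity
      have hN0 : (0 : ℚ) < (n : ℚ) / 2 := by linarith
      have h5 : (S + 2) * ((n : ℚ) / 2) ≤ (T.card : ℚ) * ((n : ℚ) / 2) :=
        mul_le_mul_of_nonneg_right hSb (le_of_lt hN0)
      have h6 : (0 : ℚ) ≤ S * ((n : ℚ) - 2) := mul_nonneg hS0 (by linarith)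
      nlinarith [h5, h6, hfinal]
  -- lower bound for the sum of floors
  have hfloor : ∀ i, α i / d i = k i + b i := by
    intro i
    rw [hαsplit i, hb, add_comm (k i * d i) (B i), Nat.add_mul_div_right _ _ (hd i), add_comm]
  have hlow : l - 1 ≤ ∑ i, α i / d i := by
    have : ∑ i, α i / d i = ∑ i, k i + ∑ i, b i := by
      rw [← Finset.sum_add_distrib]
      exact Finset.sum_congr rfl fun i _ => hfloor i
    rw [this, hkcard]
    omega
  -- upper bound
  set am : Fin n → ℕ := fun i => (α i - 1) / d i with ham
  have ham_le : ∀ i, am i * d i ≤ α i := fun i =>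
    le_trans (Nat.div_mul_le_self _ _) (Nat.sub_le _ _)
  have ham_up : ∀ i, α i ≤ (am i + 1) * d i := by
    intro i
    show α i ≤ ((α i - 1) / d i + 1) * d i
    rcases Nat.eq_zero_or_pos (α i) with h | h
    · rw [h]; exact Nat.zero_le _
    · have h1 := Nat.div_add_mod (α i - 1) (d i)
      have h2 := Nat.mod_lt (α i - 1) (hd i)
      have h3 : ((α i - 1) / d i + 1) * d i = d i * ((α i - 1) / d i) + d i := by ring
      omega
  have ham_div : ∀ i, am i ≤ α i / d i := fun i =>
    Nat.div_le_div_right (Nat.sub_le _ _)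
  have ham_sum : ∑ i, am i ≤ l - 1 := by
    by_contra hcon
    push_neg at hcon
    have hsl : l ≤ ∑ i, am i := by omega
    have hcmem : mono K (fun i => am i * d i) ∈ I ^ l := by
      apply Ideal.pow_le_pow_right hsl
      have heq : (fun i => am i * d i) = ∑ i, (Pi.single i (am i * d i) : Fin n → ℕ) := by
        funext i'
        rw [Finset.sum_apply]
        rw [Finset.sum_pi_single]
        simp
      rw [heq]
      refine mono_sum_mem_pow Finset.univ
        (fun i' => (Pi.single i' (am i' * d i') : Fin n → ℕ)) am fun i _ => ?_
      show mono K (Pi.single i (am i * d i) : Fin n → ℕ) ∈ I ^ am i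
      have hsingle : (Pi.single i (am i * d i) : Fin n → ℕ)
          = ∑ _c ∈ Finset.range (am i), (Pi.single i (d i) : Fin n → ℕ) := by
        funext j
        rw [Finset.sum_apply]
        by_cases hji : j = i
        · subst hji; simp [mul_comm]
        · simp [Pi.single_eq_of_ne hji]
      rw [hsingle]
      have := mono_sum_mem_pow (I := I) (Finset.range (am i))
        (fun _ => (Pi.single i (d i) : Fin n → ℕ)) (fun _ => 1)
        (fun c _ => by rw [pow_one]; exact (hcor i).1)
      simpa using this
    have hcle : (fun i => am i * d i) ≤ α := fun i => ham_le i
    have := hα.2 _ hcmem hcle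
    -- derive contradiction
    have hex : ∃ i, 0 < am i := by
      by_contra hc
      push_neg at hc
      have : ∑ i, am i = 0 := Finset.sum_eq_zero fun i _ => Nat.le_zero.mp (hc i)
      omega
    obtain ⟨i, hi⟩ := hex
    have hαi : α i = am i * d i := by rw [← this]
    have hcomp : am i = (am i * d i - 1) / d i := by
      rw [ham]
      simp only
      rw [← hαi]
    have : (am i * d i - 1) / d i = am i - 1 := by
      obtain ⟨q', hq'⟩ : ∃ q', am i = q' + 1 := ⟨am i - 1, by omega⟩
      rw [hq']
      have hexp : (q' + 1) * d i = q' * d i + d i := by ring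
      have hs : q' + 1 - 1 = q' := rfl
      rw [hs]
      have hd' := hd i
      apply Nat.div_eq_of_lt_le
      · omega
      · have hexp2 : (q' + 1 + 1) * d i = q' * d i + d i + d i := by ring
        omega
    omega
  -- choose the box
  obtain ⟨a, ha, hasum⟩ := exists_sum_eq ham_div (l - 1) ham_sum hlow
  refine ⟨a, fun i => ⟨?_, ?_⟩, hasum⟩
  · calc a i * d i ≤ (α i / d i) * d i := Nat.mul_le_mul_right _ (ha i).2
    _ ≤ α i := Nat.div_mul_le_self _ _
  · exact le_trans (ham_up i) (Nat.mul_le_mul_right _ (by have := (ha i).1; omega))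
end GasanovaRR
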